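/- Let p ≥ 2, c > 0, and z_1,…,z_N ∈ ℂ taking at least p+1 distinct values. Set d_{j,k} = N^{-1} Σ_{t=1}^{N} z_t^k · conj(z_t)^j for 0 ≤ j,k ≤ p, and for σ ∈ ℝ let D̃(σ) be the (p+1)×(p+1) matrix with (j,k)-entry Σ_{m=0}^{min(j,k)} (−1)^m · C(k,m) · C(j,m) · m! · (cσ)^{2m} · d_{j−m,k−m}. Then the set {σ > 0 : det D̃(σ) = 0} is nonempty and closed and its infimum is positive and attained, i.e. there is a minimal σ̂ > 0 with det D̃(σ̂) = 0. -/

import Mathlib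

open Finset

/-- Empirical conjugate moments of a finite sample `z : Fin N → ℂ`:
`d j k = N⁻¹ Σ_t z_t^k ⬝ conj(z_t)^j`. -/
noncomputable def empConjMoment {N : ℕ} (z : Fin N → ℂ) (j k : ℕ) : ℂ :=
  (N : ℂ)⁻¹ * ∑ t, (z t) ^ k * (starRingEnd ℂ) (z t) ^ j

/-- The pseudo-moment matrix `D̃(σ)` built from the empirical conjugate moments:
`(j,k)`-entry `Σ_{m=0}^{min(j,k)} (−1)^m C(k,m) C(j,m) m! (cσ)^{2m} d_{j−m,k−m}`. -/
noncomputable def pseudoMomentMatrix (p : ℕ) {N : ℕ} (z : Fin N → ℂ) (c σ : ℝ) :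
    Matrix (Fin (p + 1)) (Fin (p + 1)) ℂ :=
  fun j k => ∑ m ∈ Finset.range (min (j : ℕ) (k : ℕ) + 1),
    ((-1 : ℂ) ^ m * ((k : ℕ).choose m : ℂ) * ((j : ℕ).choose m : ℂ) * (m.factorial : ℂ)
        * ((c * σ : ℝ) : ℂ) ^ (2 * m))
      * empConjMoment z ((j : ℕ) - m) ((k : ℕ) - m)

namespace EmpiricalNoiseAux

open Matrix Polynomial

variable {N : ℕ} (z : Fin N → ℂ)

lemma conj_emp (j k : ℕ) :
    (starRingEnd ℂ) (empConjMoment z j k) = empConjMoment z k j := by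
  simp only [empConjMoment, _root_.map_mul, map_inv₀, map_natCast, map_sum, map_pow,
    Complex.conj_conj]
  congr 1
  exact Finset.sum_congr rfl fun t _ => by ring

lemma herm (p : ℕ) (c σ : ℝ) : (pseudoMomentMatrix p z c σ).IsHermitian := by
  refine Matrix.ext fun j k => ?_
  simp only [Matrix.conjTranspose_apply, pseudoMomentMatrix, Complex.star_def,
    map_sum, _root_.map_mul, map_pow, map_neg, _root_.map_one, map_natCast,
    Complex.conj_ofReal, conj_emp]
  rw [Nat.min_comm]
  exact Finset.sum_congr rfl fun m _ => by ring

lemma cont_entry (p : ℕ) (c : ℝ) (j k : Fin (p + 1)) :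
    Continuous fun σ : ℝ => pseudoMomentMatrix p z c σ j k := by
  unfold pseudoMomentMatrix
  refine continuous_finset_sum _ fun m _ => ?_
  exact ((((continuous_const.mul
    ((Complex.continuous_ofReal.comp (continuous_const.mul continuous_id)).pow _))).mul
      continuous_const))

lemma cont_det (p : ℕ) (c : ℝ) :
    Continuous fun σ : ℝ => (pseudoMomentMatrix p z c σ).det := by
  refine Continuous.matrix_det ?_
  exact continuous_matrix fun j k => cont_entry z p c j k

/-- quadratic form continuity, jointly. -/
lemma cont_q (p : ℕ) (c : ℝ) :
    Continuous fun y : ℝ × (Fin (p + 1) → ℂ) =>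
      (star y.2 ⬝ᵥ (pseudoMomentMatrix p z c y.1) *ᵥ y.2) := by
  simp only [dotProduct, Matrix.mulVec, Pi.star_apply]
  refine continuous_finset_sum _ fun j _ => ?_
  refine Continuous.mul ?_ ?_
  · exact ((continuous_apply j).comp continuous_snd).star
  · exact continuous_finset_sum _ fun k _ =>
      ((cont_entry z p c j k).comp continuous_fst).mul ((continuous_apply k).comp continuous_snd)

open scoped ComplexOrder

lemma q_selfadj (p : ℕ) (c σ : ℝ) (x : Fin (p + 1) → ℂ) :
    (star x ⬝ᵥ (pseudoMomentMatrix p z c σ) *ᵥ x).im = 0 := by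
  rw [← Complex.conj_eq_iff_im]
  calc (starRingEnd ℂ) (star x ⬝ᵥ (pseudoMomentMatrix p z c σ) *ᵥ x)
      = star (star x ⬝ᵥ (pseudoMomentMatrix p z c σ) *ᵥ x) := rfl
    _ = star ((pseudoMomentMatrix p z c σ) *ᵥ x) ⬝ᵥ x := by
        rw [Matrix.star_dotProduct, star_star]
    _ = (star x ᵥ* (pseudoMomentMatrix p z c σ)ᴴ) ⬝ᵥ x := by rw [Matrix.star_mulVec]
    _ = star x ⬝ᵥ ((pseudoMomentMatrix p z c σ)ᴴ *ᵥ x) := by rw [Matrix.dotProduct_mulVec]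
    _ = star x ⬝ᵥ (pseudoMomentMatrix p z c σ) *ᵥ x := by rw [herm z p c σ]

/-- the Vandermonde-type matrix. -/
noncomputable def vand (p : ℕ) : Matrix (Fin N) (Fin (p + 1)) ℂ :=
  fun t k => z t ^ (k : ℕ)

lemma pm_zero (p : ℕ) (c : ℝ) :
    pseudoMomentMatrix p z c 0 = (N : ℂ)⁻¹ • ((vand z p)ᴴ * vand z p) := by
  refine Matrix.ext fun j k => ?_
  have : pseudoMomentMatrix p z c 0 j k = empConjMoment z (j : ℕ) (k : ℕ) := by
    unfold pseudoMomentMatrix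
    rw [Finset.sum_eq_single 0]
    · simp
    · intro m _ hm
      simp [zero_pow (show 2 * m ≠ 0 by omega)]
    · simp
  rw [this]
  simp only [Matrix.smul_apply, Matrix.mul_apply, Matrix.conjTranspose_apply, vand,
    empConjMoment, smul_eq_mul, Complex.star_def, ← map_pow]
  congr 1
  exact Finset.sum_congr rfl fun t _ => by ring

lemma vand_mulVec_ne_zero (p : ℕ) (hdistinct : p + 1 ≤ (Finset.univ.image z).card)
    {x : Fin (p + 1) → ℂ} (hx : x ≠ 0) : vand z p *ᵥ x ≠ 0 := by
  intro h
  apply hx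
  set P : Polynomial ℂ := ∑ k : Fin (p + 1), Polynomial.C (x k) * Polynomial.X ^ (k : ℕ) with hP
  have hdeg : P.natDegree ≤ p := by
    refine Polynomial.natDegree_sum_le_of_forall_le _ _ fun k _ => ?_
    exact (Polynomial.natDegree_C_mul_X_pow_le _ _).trans (by omega)
  have heval : ∀ u ∈ Finset.univ.image z, P.eval u = 0 := by
    intro u hu
    obtain ⟨t, -, rfl⟩ := Finset.mem_image.mp hu
    have ht : (vand z p *ᵥ x) t = 0 := by rw [h]; rfl
    simp only [Matrix.mulVec, dotProduct, vand] at ht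
    simp only [hP, Polynomial.eval_finset_sum, Polynomial.eval_mul, Polynomial.eval_C,
      Polynomial.eval_pow, Polynomial.eval_X]
    rw [← ht]
    exact Finset.sum_congr rfl fun k _ => by ring
  have hP0 : P = 0 :=
    Polynomial.eq_zero_of_natDegree_lt_card_of_eval_eq_zero' P _ heval (by omega)
  funext k
  have hco : P.coeff (k : ℕ) = x k := by
    simp only [hP, Polynomial.finset_sum_coeff, Polynomial.coeff_C_mul,
      Polynomial.coeff_X_pow]
    rw [Finset.sum_eq_single k]
    · simp
    · intro b _ hb
      rw [if_neg fun hh => hb (Fin.val_injective hh.symm), mul_zero]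
    · simp
  rw [hP0] at hco
  simpa using hco.symm

lemma posdef_zero (p : ℕ) (c : ℝ) (hN : 0 < N)
    (hdistinct : p + 1 ≤ (Finset.univ.image z).card) :
    (pseudoMomentMatrix p z c 0).PosDef := by
  refine .of_dotProduct_mulVec_pos (herm z p c 0) fun ⦃x⦄ hx => ?_
  rw [pm_zero z p c, Matrix.smul_mulVec, dotProduct_smul,
    ← Matrix.mulVec_mulVec, Matrix.dotProduct_mulVec, ← Matrix.star_mulVec]
  have hw := vand_mulVec_ne_zero z p hdistinct hx
  have h1 : 0 < star (vand z p *ᵥ x) ⬝ᵥ (vand z p *ᵥ x) :=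
    Matrix.dotProduct_star_self_pos_iff.mpr hw
  have h2 : (0 : ℂ) < (N : ℂ)⁻¹ := by
    rw [show ((N : ℂ))⁻¹ = (((N : ℝ)⁻¹ : ℝ) : ℂ) by push_cast; ring]
    exact Complex.zero_lt_real.mpr (by positivity)
  rw [smul_eq_mul]
  exact mul_pos h2 h1

lemma emp00 (hN : 0 < N) : empConjMoment z 0 0 = 1 := by
  simp only [empConjMoment, pow_zero, mul_one, Finset.sum_const, Finset.card_univ,
    Fintype.card_fin, nsmul_eq_mul, mul_one]
  exact inv_mul_cancel₀ (Nat.cast_ne_zero.mpr hN.ne')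

lemma exists_neg (p : ℕ) (hp : 2 ≤ p) (hN : 0 < N) (c σ : ℝ)
    (h : (empConjMoment z 1 1).re - (c * σ) ^ 2 < 0) :
    ∃ x : Fin (p + 1) → ℂ, (star x ⬝ᵥ (pseudoMomentMatrix p z c σ) *ᵥ x).re < 0 := by
  have h1 : ((1 : Fin (p + 1)) : ℕ) = 1 := by
    rw [Fin.val_one']
    exact Nat.mod_eq_of_lt (by omega)
  have h0 : ((0 : Fin (p + 1)) : ℕ) = 0 := rfl
  set μ := empConjMoment z 0 1 with hμ
  set M := pseudoMomentMatrix p z c σ with hM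
  have e00 : M 0 0 = 1 := by
    rw [hM]; unfold pseudoMomentMatrix
    rw [h0]
    simp [emp00 z hN]
  have e01 : M 0 1 = μ := by
    rw [hM]; unfold pseudoMomentMatrix
    rw [h0, h1]
    simp [hμ]
  have e10 : M 1 0 = (starRingEnd ℂ) μ := by
    rw [hM]; unfold pseudoMomentMatrix
    rw [h0, h1, conj_emp]
    simp
  have e11 : M 1 1 = empConjMoment z 1 1 - (((c * σ) ^ 2 : ℝ) : ℂ) := by
    rw [hM]; unfold pseudoMomentMatrix
    rw [h1]
    rw [show min 1 1 + 1 = 2 by norm_num, Finset.sum_range_succ, Finset.sum_range_one]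
    simp [emp00 z hN, pow_one]
    ring
  refine ⟨(Pi.single (0 : Fin (p + 1)) (-μ) + Pi.single (1 : Fin (p + 1)) (1 : ℂ)
    : Fin (p + 1) → ℂ), ?_⟩
  have hstar : star ((Pi.single (0 : Fin (p + 1)) (-μ) + Pi.single (1 : Fin (p + 1)) (1 : ℂ)
        : Fin (p + 1) → ℂ))
      = ((Pi.single (0 : Fin (p + 1)) ((starRingEnd ℂ) (-μ))
          + Pi.single (1 : Fin (p + 1)) (1 : ℂ) : Fin (p + 1) → ℂ)) := by
    funext i
    simp only [Pi.star_apply, Pi.add_apply, Pi.single_apply]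
    split_ifs <;> simp
  rw [hstar, Matrix.mulVec_add, Matrix.mulVec_single, Matrix.mulVec_single]
  rw [add_dotProduct, single_dotProduct, single_dotProduct]
  simp only [Pi.add_apply, Pi.smul_apply, Matrix.col_apply, op_smul_eq_mul]
  rw [e00, e01, e10, e11]
  have hq : (starRingEnd ℂ) (-μ) * (1 * -μ + μ * 1)
      + 1 * ((starRingEnd ℂ) μ * -μ + (empConjMoment z 1 1 - (((c * σ) ^ 2 : ℝ) : ℂ)) * 1)
      = empConjMoment z 1 1 - ((Complex.normSq μ : ℝ) : ℂ) - (((c * σ) ^ 2 : ℝ) : ℂ) := by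
    have hmc : (starRingEnd ℂ) μ * μ = ((Complex.normSq μ : ℝ) : ℂ) := by
      rw [mul_comm]; exact Complex.mul_conj μ
    rw [map_neg]
    linear_combination -hmc
  rw [hq]
  simp only [Complex.sub_re, Complex.ofReal_re]
  have := Complex.normSq_nonneg μ
  linarith

lemma posdef_nhds (p : ℕ) (c : ℝ) {σ0 : ℝ}
    (h : (pseudoMomentMatrix p z c σ0).PosDef) :
    ∀ᶠ σ in nhds σ0, (pseudoMomentMatrix p z c σ).PosDef := by
  classical
  set S : Set (Fin (p + 1) → ℂ) := Metric.sphere 0 1 with hS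
  haveI : CompactSpace S := isCompact_iff_compactSpace.mp (isCompact_sphere 0 1)
  set C : Set (ℝ × S) :=
    {y | (star (y.2 : Fin (p + 1) → ℂ) ⬝ᵥ
        (pseudoMomentMatrix p z c y.1) *ᵥ (y.2 : Fin (p + 1) → ℂ)).re ≤ 0} with hC
  have hCclosed : IsClosed C := by
    have hcont : Continuous fun y : ℝ × S =>
        (star (y.2 : Fin (p + 1) → ℂ) ⬝ᵥ
          (pseudoMomentMatrix p z c y.1) *ᵥ (y.2 : Fin (p + 1) → ℂ)).re :=
      Complex.continuous_re.comp ((cont_q z p c).comp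
        (continuous_fst.prodMk (continuous_subtype_val.comp continuous_snd)))
    exact isClosed_le hcont continuous_const
  set A : Set ℝ := Prod.fst '' C with hA
  have hAclosed : IsClosed A := isClosedMap_fst_of_compactSpace C hCclosed
  have hσ0 : σ0 ∉ A := by
    rintro ⟨⟨σ, u⟩, hu, rfl⟩
    have hne : (u : Fin (p + 1) → ℂ) ≠ 0 := by
      have := u.2
      simp only [hS, Metric.mem_sphere, dist_zero_right] at this
      intro h0
      rw [h0] at this; simp at this
    have hpos := h.dotProduct_mulVec_pos hne
    rw [Complex.lt_def] at hpos
    simp only [hC, Set.mem_setOf_eq] at hu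
    exact absurd hu (not_le.mpr hpos.1)
  have hev : ∀ᶠ σ in nhds σ0, σ ∉ A :=
    hAclosed.isOpen_compl.mem_nhds hσ0
  refine hev.mono fun σ hσ => Matrix.PosDef.of_dotProduct_mulVec_pos (herm z p c σ) fun ⦃x⦄ hx => ?_
  have hr : (0 : ℝ) < ‖x‖ := norm_pos_iff.mpr hx
  set u : Fin (p + 1) → ℂ := ‖x‖⁻¹ • x with hu
  have hunorm : ‖u‖ = 1 := by
    rw [hu, norm_smul, norm_inv, norm_norm]
    exact inv_mul_cancel₀ hr.ne'
  have huS : u ∈ S := by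
    simp only [hS, Metric.mem_sphere, dist_zero_right]; exact hunorm
  have hre : 0 < (star u ⬝ᵥ (pseudoMomentMatrix p z c σ) *ᵥ u).re := by
    by_contra hcon
    exact hσ ⟨(σ, ⟨u, huS⟩), by simpa [hC] using not_lt.mp hcon, rfl⟩
  have hxu : x = ‖x‖ • u := by
    rw [hu, smul_smul, mul_inv_cancel₀ hr.ne', one_smul]
  have hq : star x ⬝ᵥ (pseudoMomentMatrix p z c σ) *ᵥ x
      = (‖x‖ * ‖x‖) • (star u ⬝ᵥ (pseudoMomentMatrix p z c σ) *ᵥ u) := by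
    conv_lhs => rw [hxu]
    rw [star_smul, star_trivial, Matrix.mulVec_smul, smul_dotProduct,
      dotProduct_smul, smul_smul]
  rw [hq, Complex.lt_def]
  constructor
  · simp only [Complex.smul_re, Complex.zero_re, smul_eq_mul]
    exact mul_pos (mul_pos hr hr) hre
  · simp only [Complex.smul_im, Complex.zero_im, smul_eq_mul]
    rw [q_selfadj z p c σ u, mul_zero]

end EmpiricalNoiseAux

open Matrix in
open EmpiricalNoiseAux in
open scoped ComplexOrder in
theorem empirical_noise_estimate_exists
    (p : ℕ) (hp : 2 ≤ p) (c : ℝ) (hc : 0 < c) {N : ℕ} (hN : 0 < N) (z : Fin N → ℂ)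
    (hdistinct : p + 1 ≤ (Finset.univ.image z).card) :
    {σ : ℝ | 0 < σ ∧ (pseudoMomentMatrix p z c σ).det = 0}.Nonempty ∧
    IsClosed {σ : ℝ | 0 < σ ∧ (pseudoMomentMatrix p z c σ).det = 0} ∧
    0 < sInf {σ : ℝ | 0 < σ ∧ (pseudoMomentMatrix p z c σ).det = 0} ∧
    (pseudoMomentMatrix p z c
        (sInf {σ : ℝ | 0 < σ ∧ (pseudoMomentMatrix p z c σ).det = 0})).det = 0 := by
  classical
  set Z := {σ : ℝ | 0 < σ ∧ (pseudoMomentMatrix p z c σ).det = 0} with hZ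
  set S : Set ℝ :=
    {σ | ∃ x : Fin (p + 1) → ℂ, (star x ⬝ᵥ (pseudoMomentMatrix p z c σ) *ᵥ x).re < 0}
    with hSdef
  have hSopen : IsOpen S := by
    have hrw : S = ⋃ x : Fin (p + 1) → ℂ,
        {σ | (star x ⬝ᵥ (pseudoMomentMatrix p z c σ) *ᵥ x).re < 0} := by
      ext σ; simp [hSdef]
    rw [hrw]
    refine isOpen_iUnion fun x => ?_
    have hcq : Continuous fun σ : ℝ =>
        (star x ⬝ᵥ (pseudoMomentMatrix p z c σ) *ᵥ x).re :=
      Complex.continuous_re.comp ((cont_q z p c).comp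
        (continuous_id.prodMk continuous_const))
    exact isOpen_lt hcq continuous_const
  have hPDnotS : ∀ σ, (pseudoMomentMatrix p z c σ).PosDef → σ ∉ S := by
    rintro σ hPD ⟨x, hxlt⟩
    by_cases hx : x = 0
    · rw [hx] at hxlt; simp at hxlt
    · have hlt := hPD.dotProduct_mulVec_pos hx
      rw [Complex.lt_def] at hlt
      simp only [Complex.zero_re] at hlt
      linarith [hlt.1]
  set S' := S ∩ Set.Ioi (0 : ℝ) with hS'
  have hPD0 : (pseudoMomentMatrix p z c 0).PosDef := posdef_zero z p c hN hdistinct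
  set a := (empConjMoment z 1 1).re with ha
  set σbig := (Real.sqrt |a| + 1) / c with hσbig
  have hσbigpos : 0 < σbig := div_pos (by positivity) hc
  have hcσ : c * σbig = Real.sqrt |a| + 1 := by
    rw [hσbig, mul_div_assoc', mul_div_cancel_left₀ _ hc.ne']
  have hσbigS : σbig ∈ S' := by
    refine ⟨exists_neg z p hp hN c σbig ?_, hσbigpos⟩
    rw [hcσ, ← ha]
    have h1 : a ≤ |a| := le_abs_self a
    have h2 : Real.sqrt |a| ^ 2 = |a| := Real.sq_sqrt (abs_nonneg a)
    nlinarith [Real.sqrt_nonneg |a|]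
  have hS'ne : S'.Nonempty := ⟨σbig, hσbigS⟩
  have hS'bdd : BddBelow S' := ⟨0, fun y hy => le_of_lt hy.2⟩
  set σstar := sInf S' with hσstar
  obtain ⟨ε, hεpos, hεPD⟩ : ∃ ε > 0, ∀ σ : ℝ,
      |σ - 0| < ε → (pseudoMomentMatrix p z c σ).PosDef := by
    obtain ⟨ε, hε, h⟩ := Metric.eventually_nhds_iff.mp (posdef_nhds z p c hPD0)
    exact ⟨ε, hε, fun σ hσ => h (by simpa [Real.dist_eq] using hσ)⟩
  have hlb : ∀ y ∈ S', ε ≤ y := by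
    intro y hy
    by_contra hlt
    push_neg at hlt
    have hyPD : (pseudoMomentMatrix p z c y).PosDef :=
      hεPD y (by rw [sub_zero, abs_of_pos hy.2]; exact hlt)
    exact hPDnotS y hyPD hy.1
  have hσstarpos : 0 < σstar := lt_of_lt_of_le hεpos (le_csInf hS'ne hlb)
  have hσstarS : σstar ∉ S := by
    intro hmem
    obtain ⟨δ, hδ, hball⟩ := Metric.isOpen_iff.mp hSopen σstar hmem
    have hmin : 0 < min δ σstar := lt_min hδ hσstarpos
    have hymem : σstar - min δ σstar / 2 ∈ S' := by
      refine ⟨hball ?_, ?_⟩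
      · rw [Metric.mem_ball, Real.dist_eq]
        have hrw : σstar - min δ σstar / 2 - σstar = -(min δ σstar / 2) := by ring
        rw [hrw, abs_neg, abs_of_pos (by linarith)]
        have := min_le_left δ σstar; linarith
      · rw [Set.mem_Ioi]
        have := min_le_right δ σstar; linarith
    have := csInf_le hS'bdd hymem
    rw [← hσstar] at this
    linarith
  have hPSD : (pseudoMomentMatrix p z c σstar).PosSemidef := by
    refine .of_dotProduct_mulVec_nonneg (herm z p c σstar) fun x => ?_
    rw [Complex.le_def]
    constructor
    · simp only [Complex.zero_re]
      by_contra hcon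
      push_neg at hcon
      exact hσstarS ⟨x, hcon⟩
    · rw [Complex.zero_im, q_selfadj z p c σstar x]
  have hdet : (pseudoMomentMatrix p z c σstar).det = 0 := by
    by_contra hne
    have hPD : (pseudoMomentMatrix p z c σstar).PosDef := by
      refine .of_dotProduct_mulVec_pos (herm z p c σstar) fun ⦃x⦄ hx => ?_
      refine lt_of_le_of_ne (hPSD.dotProduct_mulVec_nonneg x) fun h0 => ?_
      have hMx : (pseudoMomentMatrix p z c σstar) *ᵥ x = 0 :=
        (hPSD.dotProduct_mulVec_zero_iff x).mp h0.symm
      have hinj : Function.Injective (pseudoMomentMatrix p z c σstar).mulVec :=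
        Matrix.mulVec_injective_iff_isUnit.mpr
          ((Matrix.isUnit_iff_isUnit_det _).mpr (isUnit_iff_ne_zero.mpr hne))
      exact hx (hinj (show _ = (pseudoMomentMatrix p z c σstar) *ᵥ 0 by
        rw [hMx, Matrix.mulVec_zero]))
    obtain ⟨δ, hδ, hball⟩ := Metric.eventually_nhds_iff.mp (posdef_nhds z p c hPD)
    obtain ⟨y, hyS', hylt⟩ := (csInf_lt_iff hS'bdd hS'ne).mp
      (show sInf S' < σstar + δ by rw [← hσstar]; linarith)
    have hyge : σstar ≤ y := by rw [hσstar]; exact csInf_le hS'bdd hyS'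
    have hyPD : (pseudoMomentMatrix p z c y).PosDef :=
      hball (by rw [Real.dist_eq, abs_of_nonneg (by linarith)]; linarith)
    exact hPDnotS y hyPD hyS'.1
  have hZne : Z.Nonempty := ⟨σstar, ⟨hσstarpos, hdet⟩⟩
  have hdet0 : (pseudoMomentMatrix p z c 0).det ≠ 0 := hPD0.det_pos.ne'
  obtain ⟨ε2, hε2, hball2⟩ : ∃ ε2 > 0, ∀ σ : ℝ,
      |σ| < ε2 → (pseudoMomentMatrix p z c σ).det ≠ 0 := by
    have hopen : IsOpen {σ : ℝ | (pseudoMomentMatrix p z c σ).det ≠ 0} :=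
      (isClosed_eq (cont_det z p c) continuous_const).isOpen_compl
    obtain ⟨ε2, hε2, hball⟩ := Metric.isOpen_iff.mp hopen 0 hdet0
    exact ⟨ε2, hε2, fun σ hσ => hball (by simpa [Real.dist_eq] using hσ)⟩
  have hZeq : Z = Set.Ici ε2 ∩ {σ : ℝ | (pseudoMomentMatrix p z c σ).det = 0} := by
    ext σ
    constructor
    · rintro ⟨hσpos, hσdet⟩
      refine ⟨?_, hσdet⟩
      by_contra hlt
      rw [Set.mem_Ici, not_le] at hlt
      exact hball2 σ (by rw [abs_of_pos hσpos]; exact hlt) hσdet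
    · rintro ⟨hge, hd⟩
      exact ⟨lt_of_lt_of_le hε2 hge, hd⟩
  have hZclosed : IsClosed Z := by
    rw [hZeq]
    exact isClosed_Ici.inter (isClosed_eq (cont_det z p c) continuous_const)
  have hZbdd : BddBelow Z := ⟨0, fun y hy => le_of_lt hy.1⟩
  have hmem := hZclosed.csInf_mem hZne hZbdd
  exact ⟨hZne, hZclosed, hmem.1, hmem.2⟩
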